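/- Let R be a Noetherian ring, P ⊆ Q prime ideals of R such that the height of Q/P in R/P is at least 2. Then there exist infinitely many prime ideals P' of R with P ⊆ P' ⊆ Q and height(P'/P) = 1. -/

import Mathlib

/-- For a prime `P`, the poset of primes of `R` containing `P`; it is
order-isomorphic to `Spec (R/P)`, so heights in it are heights of `P'/P`. -/
abbrev PrimesOver {R : Type*} [CommRing R] (P : Ideal R) :=
  {p : PrimeSpectrum R // P ≤ p.asIdeal}


open Ideal

/-- A Noetherian ring with a nilpotent ideal whose quotient is Artinian is Artinian. -/
theorem isArtinianRing_of_nilpotent_of_artinian_quotient {S : Type*} [CommRing S]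
    [IsNoetherianRing S] (I : Ideal S) [IsArtinianRing (S ⧸ I)] (k : ℕ) (hk : I ^ k = ⊥) :
    IsArtinianRing S := by
  have step : ∀ i : ℕ, IsArtinian S (I ^ (i + 1) : Ideal S) → IsArtinian S (I ^ i : Ideal S) := by
    intro i hi
    have hle : (I ^ (i + 1) : Ideal S) ≤ I ^ i := Ideal.pow_le_pow_right (by omega)
    set N : Submodule S (I ^ i : Ideal S) :=
      Submodule.comap (Submodule.subtype (I ^ i : Ideal S)) (I ^ (i + 1) : Ideal S) with hNdef
    haveI hN1 : IsArtinian S N :=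
      isArtinian_of_linearEquiv (Submodule.comapSubtypeEquivOfLe hle).symm
    -- the quotient is a f.g. torsion module over `S ⧸ I`
    set M := (I ^ i : Ideal S) ⧸ N
    have tor : Module.IsTorsionBySet S M (I : Set S) := by
      intro x a
      obtain ⟨y, rfl⟩ := Submodule.Quotient.mk_surjective N x
      rw [← Submodule.Quotient.mk_smul, Submodule.Quotient.mk_eq_zero]
      show ((a : S) • y : (I ^ i : Ideal S)).1 ∈ I ^ (i + 1)
      rw [pow_succ']
      exact Ideal.mul_mem_mul a.2 y.2
    letI : Module (S ⧸ I) M := tor.module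
    haveI : IsScalarTower S (S ⧸ I) M := tor.isScalarTower
    haveI : Module.Finite S M := Module.Finite.quotient S N
    haveI : Module.Finite (S ⧸ I) M := Module.Finite.of_restrictScalars_finite S (S ⧸ I) M
    haveI : IsArtinian (S ⧸ I) M := isArtinian_of_fg_of_artinian'
    have hM : IsArtinian S M := by
      let f : Submodule S M ↪o Submodule (S ⧸ I) M :=
        { toFun := fun p =>
            { carrier := p
              add_mem' := fun h1 h2 => p.add_mem h1 h2
              zero_mem' := p.zero_mem
              smul_mem' := by
                intro c x hx
                obtain ⟨s, rfl⟩ := Ideal.Quotient.mk_surjective c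
                have hms : (Ideal.Quotient.mk I s) • x = s • x := by
                  rw [← Ideal.Quotient.algebraMap_eq I]
                  exact algebraMap_smul (S ⧸ I) s x
                rw [hms]
                exact p.smul_mem s hx }
          inj' := fun p q h => by
            apply SetLike.coe_injective
            exact congrArg (fun t : Submodule (S ⧸ I) M => (t : Set M)) h
          map_rel_iff' := ⟨fun h x hx => h hx, fun h x hx => h hx⟩ }
      exact ⟨f.wellFounded (‹IsArtinian (S ⧸ I) M›).wf⟩
    exact (isArtinian_iff_submodule_quotient N).2 ⟨hN1, hM⟩
  have key : ∀ j : ℕ, IsArtinian S (I ^ (k - j) : Ideal S) := by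
    intro j
    induction j with
    | zero =>
      rw [Nat.sub_zero, hk]
      haveI : Subsingleton (↥(⊥ : Ideal S)) :=
        ⟨fun a b => Subtype.ext (by
          rw [(Submodule.mem_bot S).mp a.2, (Submodule.mem_bot S).mp b.2])⟩
      haveI : Finite (↥(⊥ : Ideal S)) := Finite.of_subsingleton
      exact isArtinian_of_finite
    | succ j ih =>
      rcases Nat.lt_or_ge j k with h | h
      · rcases Nat.exists_eq_add_of_le (Nat.succ_le_of_lt h) with ⟨c, hc⟩
        have h1 : k - j = (k - (j + 1)) + 1 := by omega
        rw [h1] at ih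
        exact step _ ih
      · have : k - (j + 1) = k - j := by omega
        rw [this]; exact ih
  have := key k
  rw [Nat.sub_self, pow_zero, Ideal.one_eq_top] at this
  exact isArtinian_of_linearEquiv (Submodule.topEquiv (R := S) (M := S))

/-- Core of Krull's principal ideal theorem, local case: if the maximal ideal of a Noetherian
local ring is minimal over a principal ideal, there is no chain `q2 < q < maximalIdeal`. -/
theorem krull_aux {B : Type*} [CommRing B] [IsNoetherianRing B] [IsLocalRing B] (x : B)
    (hx : IsLocalRing.maximalIdeal B ∈ (Ideal.span {x}).minimalPrimes)
    {q : Ideal B} (hq : q.IsPrime) (hql : q < IsLocalRing.maximalIdeal B)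
    {q2 : Ideal B} (hq2 : q2.IsPrime) (h2 : q2 < q) : False := by
  set m := IsLocalRing.maximalIdeal B with hm
  have hxq : x ∉ q := by
    intro hxq
    have := hx.2 ⟨hq, (Ideal.span_singleton_le_iff_mem q).mpr hxq⟩ hql.le
    exact absurd this (not_le_of_gt hql)
  have hxm : x ∈ m := hx.1.2 (Ideal.mem_span_singleton_self x)
  -- every prime containing x is m
  have huniq : ∀ r : Ideal B, r.IsPrime → x ∈ r → r = m := by
    intro r hr hxr
    have hrm : r ≤ m := IsLocalRing.le_maximalIdeal hr.ne_top
    exact le_antisymm hrm (hx.2 ⟨hr, (Ideal.span_singleton_le_iff_mem r).mpr hxr⟩ hrm)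
  -- the quotient D = B / (x) is Artinian
  set D := B ⧸ Ideal.span {x} with hD
  set mk := Ideal.Quotient.mk (Ideal.span {x}) with hmk
  have hmbar : Ideal.map mk m ≤ nilradical D := by
    rw [nilradical_eq_sInf]
    refine le_sInf fun J hJ => ?_
    haveI : J.IsPrime := hJ
    have h1 : x ∈ Ideal.comap mk J := by
      simp only [Ideal.mem_comap, map_zero, ← Ideal.Quotient.eq_zero_iff_mem.symm]
      have : mk x = 0 := Ideal.Quotient.eq_zero_iff_mem.mpr (Ideal.mem_span_singleton_self x)
      rw [this]; exact J.zero_mem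
    have := huniq (Ideal.comap mk J) (Ideal.IsPrime.comap mk) h1
    rw [Ideal.map_le_iff_le_comap, ← this]
  obtain ⟨n0, hn0⟩ := IsNoetherianRing.isNilpotent_nilradical D
  have hmk0 : (Ideal.map mk m) ^ n0 = ⊥ := by
    have h1 := pow_le_pow_left' hmbar n0
    rw [hn0] at h1
    simpa using h1
  haveI : IsArtinianRing ((B ⧸ Ideal.span {x}) ⧸ Ideal.map mk m) := by
    haveI : m.IsMaximal := IsLocalRing.maximalIdeal.isMaximal B
    have e := DoubleQuot.quotQuotEquivQuotOfLE (hx.1.2 : Ideal.span {x} ≤ m)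
    letI : Field (B ⧸ m) := Ideal.Quotient.field m
    haveI : IsArtinianRing (B ⧸ m) := inferInstance
    exact Function.Surjective.isArtinianRing (f := e.symm.toRingHom) e.symm.surjective
  haveI hDart : IsArtinianRing D :=
    isArtinianRing_of_nilpotent_of_artinian_quotient (Ideal.map mk m) n0 hmk0
  -- symbolic powers of q
  set C := Localization.AtPrime q with hC
  set φ := algebraMap B C with hφ
  haveI : IsNoetherianRing C := IsLocalization.isNoetherianRing q.primeCompl C ‹_›
  set mq := Ideal.map φ q with hmq
  set s : ℕ → Ideal B := fun n => Ideal.comap φ (mq ^ n) with hs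
  have hsmono : ∀ {a b : ℕ}, a ≤ b → s b ≤ s a :=
    fun hab => Ideal.comap_mono (Ideal.pow_le_pow_right hab)
  -- stabilization modulo (x) via Artinianness of D
  set t : ℕ →o (Submodule D D)ᵒᵈ :=
    ⟨fun n => OrderDual.toDual (Ideal.map mk (s n)),
      fun a b hab => Ideal.map_mono (hsmono hab)⟩ with ht
  obtain ⟨n, hn⟩ := IsArtinian.monotone_stabilizes t
  have hstab : Ideal.map mk (s n) = Ideal.map mk (s (n + 1)) :=
    congrArg OrderDual.ofDual (hn (n + 1) (Nat.le_succ n))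
  -- s n ≤ s (n+1) ⊔ m * s n
  have hxunit : IsUnit (φ x) := IsLocalization.map_units C (⟨x, hxq⟩ : q.primeCompl)
  have hkey : s n ≤ s (n + 1) ⊔ m • (s n : Ideal B) := by
    intro f hf
    have : mk f ∈ Ideal.map mk (s (n + 1)) := by
      rw [← hstab]; exact Ideal.mem_map_of_mem mk hf
    obtain ⟨g, hg, hgf⟩ := (Ideal.mem_map_iff_of_surjective mk Ideal.Quotient.mk_surjective).mp this
    have hfg : f - g ∈ Ideal.span {x} := by
      rw [← Ideal.Quotient.mk_eq_mk_iff_sub_mem] at *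
      exact hgf.symm
    obtain ⟨a, ha⟩ := Ideal.mem_span_singleton'.mp hfg
    have hax : a * x ∈ s n := by
      rw [ha]
      exact Submodule.sub_mem _ hf (hsmono (Nat.le_succ n) hg)
    have haa : a ∈ s n := by
      have : φ (a * x) ∈ mq ^ n := hax
      rw [_root_.map_mul] at this
      exact (Ideal.mul_unit_mem_iff_mem _ hxunit).mp this
    have hfeq : f = g + x * a := by rw [mul_comm, ha]; ring
    rw [hfeq]
    refine Submodule.add_mem _ (Ideal.mem_sup_left hg) (Ideal.mem_sup_right ?_)
    rw [Ideal.smul_eq_mul]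
    exact Ideal.mul_mem_mul hxm haa
  have hjac : m ≤ Ideal.jacobson (⊥ : Ideal B) :=
    (IsLocalRing.jacobson_eq_maximalIdeal (⊥ : Ideal B) bot_ne_top).ge
  have hsn : s n = s (n + 1) :=
    le_antisymm
      (Submodule.le_of_le_smul_of_le_jacobson_bot (IsNoetherian.noetherian (s n)) hjac hkey)
      (hsmono (Nat.le_succ n))
  have hpow : mq ^ n = mq ^ (n + 1) := by
    have h1 := IsLocalization.map_comap q.primeCompl C (mq ^ n)
    have h2 := IsLocalization.map_comap q.primeCompl C (mq ^ (n + 1))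
    rw [← h1, ← h2]
    exact congrArg (Ideal.map φ) hsn
  have hbot : mq ^ (n + 1) = ⊥ := by
    refine Submodule.eq_bot_of_le_smul_of_le_jacobson_bot mq (mq ^ (n + 1))
      (IsNoetherian.noetherian _) ?_ ?_
    · rw [Ideal.smul_eq_mul]
      have heq : mq ^ (n + 1) = mq * mq ^ (n + 1) := by
        conv_lhs => rw [pow_succ' mq n, hpow]
      exact le_of_eq heq
    · have : mq = IsLocalRing.maximalIdeal C := Localization.AtPrime.map_eq_maximalIdeal
      rw [this, IsLocalRing.jacobson_eq_maximalIdeal (⊥ : Ideal C) bot_ne_top]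
  -- now use the second prime q2
  have hdisj : Disjoint ((q.primeCompl : Submonoid B) : Set B) (q2 : Set B) :=
    Set.disjoint_left.mpr fun a ha ha2 => ha (h2.le ha2)
  have hq2' : (Ideal.map φ q2).IsPrime :=
    IsLocalization.isPrime_of_isPrime_disjoint q.primeCompl C q2 hq2 hdisj
  have hmq2 : mq ≤ Ideal.map φ q2 := by
    calc mq ≤ Ideal.radical mq := Ideal.le_radical
      _ = Ideal.radical (mq ^ (n + 1)) := (Ideal.radical_pow _ (Nat.succ_ne_zero n)).symm
      _ = Ideal.radical ⊥ := by rw [hbot]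
      _ = nilradical C := rfl
      _ ≤ Ideal.map φ q2 := nilradical_le_prime _
  have hqq2 : q ≤ q2 := by
    have h1 : q ≤ Ideal.comap φ mq := Ideal.le_comap_map
    have h2' : Ideal.comap φ mq ≤ Ideal.comap φ (Ideal.map φ q2) := Ideal.comap_mono hmq2
    have h3 : Ideal.comap φ (Ideal.map φ q2) = q2 :=
      IsLocalization.comap_map_of_isPrime_disjoint q.primeCompl C hq2 hdisj
    exact h3 ▸ h1.trans h2'
  exact (h2.not_ge hqq2).elim

set_option maxHeartbeats 1000000 in
/-- Krull's principal ideal theorem (chain form): if `p` is minimal over a principal ideal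
in a Noetherian ring, there is no chain `q2 < q1 < p` of primes. -/
theorem krull_principal {A : Type*} [CommRing A] [IsNoetherianRing A] {x : A} {p : Ideal A}
    (hp : p ∈ (Ideal.span {x}).minimalPrimes) {q1 q2 : Ideal A}
    (h1 : q1.IsPrime) (h2 : q2.IsPrime) (h21 : q2 < q1) (h1p : q1 < p) : False := by
  haveI hpp : p.IsPrime := hp.1.1
  set B := Localization.AtPrime p with hB
  set φ := algebraMap A B with hφ
  haveI : IsNoetherianRing B := IsLocalization.isNoetherianRing p.primeCompl B ‹_›
  have hcomap : Ideal.comap φ (IsLocalRing.maximalIdeal B) = p :=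
    Localization.AtPrime.comap_maximalIdeal
  have hmap : Ideal.map φ p = IsLocalRing.maximalIdeal B :=
    Localization.AtPrime.map_eq_maximalIdeal
  have hxp : x ∈ p := hp.1.2 (Ideal.mem_span_singleton_self x)
  have hmin : IsLocalRing.maximalIdeal B ∈ (Ideal.span {φ x}).minimalPrimes := by
    refine ⟨⟨(IsLocalRing.maximalIdeal.isMaximal B).isPrime, ?_⟩, ?_⟩
    · rw [Ideal.span_singleton_le_iff_mem, ← hmap]
      exact Ideal.mem_map_of_mem φ hxp
    · rintro r ⟨hrprime, hrx⟩ hrm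
      have hxr : x ∈ Ideal.comap φ r := Ideal.mem_comap.mpr (hrx (Ideal.mem_span_singleton_self _))
      have hrp : Ideal.comap φ r ≤ p := le_trans (Ideal.comap_mono hrm) (le_of_eq hcomap)
      have : p ≤ Ideal.comap φ r :=
        hp.2 ⟨hrprime.comap φ, (Ideal.span_singleton_le_iff_mem _).mpr hxr⟩ hrp
      have hcr : Ideal.comap φ r = p := le_antisymm hrp this
      have : r = IsLocalRing.maximalIdeal B := by
        rw [← IsLocalization.map_comap p.primeCompl B r, Ideal.under_def, hcr, hmap]
      exact this.ge
  have hd1 : Disjoint ((p.primeCompl : Submonoid A) : Set A) (q1 : Set A) :=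
    Set.disjoint_left.mpr fun a ha ha1 => ha (h1p.le ha1)
  have hd2 : Disjoint ((p.primeCompl : Submonoid A) : Set A) (q2 : Set A) :=
    Set.disjoint_left.mpr fun a ha ha2 => ha (h1p.le (h21.le ha2))
  have hq1' : (Ideal.map φ q1).IsPrime :=
    IsLocalization.isPrime_of_isPrime_disjoint p.primeCompl B q1 h1 hd1
  have hq2' : (Ideal.map φ q2).IsPrime :=
    IsLocalization.isPrime_of_isPrime_disjoint p.primeCompl B q2 h2 hd2
  have hc1 : Ideal.comap φ (Ideal.map φ q1) = q1 :=
    IsLocalization.comap_map_of_isPrime_disjoint p.primeCompl B h1 hd1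
  have hc2 : Ideal.comap φ (Ideal.map φ q2) = q2 :=
    IsLocalization.comap_map_of_isPrime_disjoint p.primeCompl B h2 hd2
  have h21' : Ideal.map φ q2 < Ideal.map φ q1 := by
    refine lt_of_le_of_ne (Ideal.map_mono h21.le) fun h => ?_
    exact h21.ne (by rw [← hc2, ← hc1, h])
  have h1m' : Ideal.map φ q1 < IsLocalRing.maximalIdeal B := by
    refine lt_of_le_of_ne (hmap ▸ Ideal.map_mono h1p.le) fun h => ?_
    exact h1p.ne (by rw [← hc1, h, hcomap])
  exact krull_aux (φ x) hmin hq1' h1m' hq2' h21'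

/-- Krull's principal ideal theorem: a prime minimal over a principal ideal has height ≤ 1. -/
theorem height_le_one_of_minimalPrimes {A : Type*} [CommRing A] [IsNoetherianRing A] {x : A}
    (p : PrimeSpectrum A) (hp : p.asIdeal ∈ (Ideal.span {x}).minimalPrimes) :
    Order.height p ≤ 1 := by
  by_contra h
  push_neg at h
  have h2 : (2 : ℕ∞) ≤ Order.height p := Order.add_one_le_of_lt h
  obtain ⟨l, hlast, hlen⟩ := Order.exists_series_of_le_height p (n := 2) h2
  have h01 : l ⟨0, by omega⟩ < l ⟨1, by omega⟩ := l.strictMono (by simp [Fin.lt_def, hlen])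
  have h12 : l ⟨1, by omega⟩ < l ⟨2, by omega⟩ := l.strictMono (by simp [Fin.lt_def, hlen])
  have hl2 : l ⟨2, by omega⟩ = p := by
    rw [← hlast]
    congr 1
    simp [RelSeries.last, Fin.last, hlen]
  rw [hl2] at h12
  exact krull_principal hp (l ⟨1, by omega⟩).isPrime (l ⟨0, by omega⟩).isPrime
    ((PrimeSpectrum.asIdeal_lt_asIdeal _ _).mpr h01)
    ((PrimeSpectrum.asIdeal_lt_asIdeal _ _).mpr h12)

/-- In a Noetherian domain, below any prime of height ≥ 2 there are infinitely many
primes of height exactly 1. -/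
theorem infinite_height_one_primes_le {A : Type*} [CommRing A] [IsDomain A] [IsNoetherianRing A]
    (Q' : PrimeSpectrum A) (hht : 2 ≤ Order.height Q') :
    {p : PrimeSpectrum A | p ≤ Q' ∧ Order.height p = 1}.Infinite := by
  by_contra hfin
  rw [Set.not_infinite] at hfin
  classical
  set S := {p : PrimeSpectrum A | p ≤ Q' ∧ Order.height p = 1} with hS
  set s : Finset (Ideal A) := insert ⊥ (hfin.toFinset.image PrimeSpectrum.asIdeal) with hs
  have hcover : (Q'.asIdeal : Set A) ⊆ ⋃ i ∈ (s : Set (Ideal A)), ((id i : Ideal A) : Set A) := by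
    intro y hy
    by_cases hy0 : y = 0
    · exact Set.mem_biUnion (show (⊥ : Ideal A) ∈ (s : Set (Ideal A)) by simp [hs])
        (by simp [hy0, Ideal.zero_mem])
    · have hsp : Ideal.span {y} ≤ Q'.asIdeal := (Ideal.span_singleton_le_iff_mem _).mpr hy
      haveI := Q'.isPrime
      obtain ⟨r, hrmin, hrle⟩ := Ideal.exists_minimalPrimes_le hsp
      haveI hrp : r.IsPrime := hrmin.1.1
      set pr : PrimeSpectrum A := ⟨r, hrp⟩ with hpr
      have hyr : y ∈ r := hrmin.1.2 (Ideal.mem_span_singleton_self y)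
      have hmem : pr ∈ S := by
        refine ⟨(PrimeSpectrum.asIdeal_le_asIdeal pr Q').mp hrle, ?_⟩
        refine le_antisymm (height_le_one_of_minimalPrimes pr hrmin) ?_
        have hbot : (⟨⊥, Ideal.bot_prime⟩ : PrimeSpectrum A) < pr := by
          rw [← PrimeSpectrum.asIdeal_lt_asIdeal]
          refine lt_of_le_of_ne bot_le fun h => hy0 ?_
          have hyb : y ∈ ((⟨⊥, Ideal.bot_prime⟩ : PrimeSpectrum A)).asIdeal := by
            rw [h]; exact hyr
          simpa using hyb
        by_contra hlt
        push_neg at hlt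
        have h0 : Order.height pr = 0 := by
          exact ENat.lt_one_iff_eq_zero.mp hlt
        exact absurd (Order.height_eq_zero.mp h0 hbot.le) hbot.not_ge
      have hrs : r ∈ (s : Set (Ideal A)) := by
        simp only [hs, Finset.coe_insert, Set.mem_insert_iff, Finset.coe_image, Set.mem_image,
          Set.Finite.coe_toFinset]
        exact Or.inr ⟨pr, hmem, rfl⟩
      exact Set.mem_biUnion hrs hyr
  have hex := (Ideal.subset_union_prime (f := (id : Ideal A → Ideal A)) (⊥ : Ideal A) (⊥ : Ideal A)
    (fun i hi _ _ => by
      simp only [hs, Finset.mem_insert, Finset.mem_image, Set.Finite.mem_toFinset] at hi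
      rcases hi with rfl | ⟨p, hp, rfl⟩
      · exact Ideal.bot_prime
      · exact p.isPrime)).mp hcover
  obtain ⟨i, his, hQi⟩ := hex
  simp only [hs, Finset.mem_insert, Finset.mem_image, Set.Finite.mem_toFinset] at his
  rcases his with rfl | ⟨p, hp, rfl⟩
  · have : Order.height Q' = 0 := Order.height_eq_zero.mpr fun b _ => by
      rw [← PrimeSpectrum.asIdeal_le_asIdeal]
      exact le_trans hQi bot_le
    rw [this] at hht
    exact absurd hht (by decide)
  · have hple : p ≤ Q' := hp.1
    have : Q' = p := le_antisymm ((PrimeSpectrum.asIdeal_le_asIdeal Q' p).mp hQi) hple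
    rw [this, hp.2] at hht
    exact absurd hht (by decide)

/-- The primes over `P` are order isomorphic to the spectrum of `R ⧸ P`. -/
noncomputable def primesOverOrderIso {R : Type*} [CommRing R] (P : Ideal R) :
    PrimesOver P ≃o PrimeSpectrum (R ⧸ P) where
  toFun p := ⟨Ideal.map (Ideal.Quotient.mk P) p.1.asIdeal,
    haveI := p.1.isPrime
    Ideal.map_isPrime_of_surjective Ideal.Quotient.mk_surjective
      (by rw [Ideal.mk_ker]; exact p.2)⟩
  invFun q := ⟨⟨Ideal.comap (Ideal.Quotient.mk P) q.asIdeal,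
      haveI := q.isPrime
      Ideal.IsPrime.comap _⟩,
    fun a ha => Ideal.mem_comap.mpr
      (by rw [Ideal.Quotient.eq_zero_iff_mem.mpr ha]; exact q.asIdeal.zero_mem)⟩
  left_inv p := by
    apply Subtype.ext
    apply PrimeSpectrum.ext
    show Ideal.comap _ (Ideal.map _ _) = _
    rw [Ideal.comap_map_of_surjective _ Ideal.Quotient.mk_surjective,
      ← RingHom.ker_eq_comap_bot, Ideal.mk_ker]
    exact sup_eq_left.mpr p.2
  right_inv q := by
    apply PrimeSpectrum.ext
    exact Ideal.map_comap_of_surjective _ Ideal.Quotient.mk_surjective q.asIdeal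
  map_rel_iff' := by
    intro a b
    constructor
    · intro h
      replace h : Ideal.map (Ideal.Quotient.mk P) a.1.asIdeal ≤
          Ideal.map (Ideal.Quotient.mk P) b.1.asIdeal := h
      have h2 := Ideal.comap_mono (f := Ideal.Quotient.mk P) h
      rw [Ideal.comap_map_of_surjective _ Ideal.Quotient.mk_surjective,
        Ideal.comap_map_of_surjective _ Ideal.Quotient.mk_surjective,
        ← RingHom.ker_eq_comap_bot, Ideal.mk_ker] at h2
      have ha : a.1.asIdeal ⊔ P = a.1.asIdeal := sup_eq_left.mpr a.2
      have hb : b.1.asIdeal ⊔ P = b.1.asIdeal := sup_eq_left.mpr b.2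
      rw [ha, hb] at h2
      exact Subtype.coe_le_coe.mp ((PrimeSpectrum.asIdeal_le_asIdeal a.1 b.1).mp h2)
    · intro h
      show Ideal.map (Ideal.Quotient.mk P) a.1.asIdeal ≤
          Ideal.map (Ideal.Quotient.mk P) b.1.asIdeal
      exact Ideal.map_mono ((PrimeSpectrum.asIdeal_le_asIdeal a.1 b.1).mpr
        (Subtype.coe_le_coe.mpr h))

/-- Let `R` be Noetherian and `P ⊆ Q` primes with `height (Q/P) ≥ 2`. Then there
are infinitely many primes `P'` with `P ⊆ P' ⊆ Q` and `height (P'/P) = 1`. -/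
theorem infinitely_many_intermediate_primes {R : Type*} [CommRing R]
    [IsNoetherianRing R] (P Q : Ideal R) (hP : P.IsPrime) (hQ : Q.IsPrime)
    (hPQ : P ≤ Q)
    (hht : 2 ≤ Order.height (⟨⟨Q, hQ⟩, hPQ⟩ : PrimesOver P)) :
    {p : PrimesOver P | p.1.asIdeal ≤ Q ∧ Order.height p = 1}.Infinite := by
  classical
  haveI : P.IsPrime := hP
  set e := primesOverOrderIso P with he
  set Q0 : PrimesOver P := ⟨⟨Q, hQ⟩, hPQ⟩ with hQ0
  have hht' : 2 ≤ Order.height (e Q0) := by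
    rw [Order.height_orderIso e Q0]; exact hht
  have hinf := infinite_height_one_primes_le (e Q0) hht'
  have himg : e.symm '' {p : PrimeSpectrum (R ⧸ P) | p ≤ e Q0 ∧ Order.height p = 1} ⊆
      {p : PrimesOver P | p.1.asIdeal ≤ Q ∧ Order.height p = 1} := by
    rintro _ ⟨q, ⟨hq1, hq2⟩, rfl⟩
    constructor
    · have h1 : e.symm q ≤ e.symm (e Q0) := e.symm.monotone hq1
      rw [e.symm_apply_apply] at h1
      exact (PrimeSpectrum.asIdeal_le_asIdeal (e.symm q).1 Q0.1).mpr (Subtype.coe_le_coe.mpr h1)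
    · have h2 := Order.height_orderIso e (e.symm q)
      rw [e.apply_symm_apply] at h2
      rw [← h2]
      exact hq2
  exact ((hinf.image (e.symm.injective.injOn)).mono himg)
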